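/- Let U : ℝ³ → ℝ be differentiable with gradient ∇U, and let x : I → ℝ³ be differentiable on an interval I satisfying the gradient-projection flow ẋ(t) = x(t) × (x(t) × ∇U(x(t))). Then for all t ∈ I, the derivative of t ↦ U(x(t)) equals −‖x(t) × ∇U(x(t))‖² ≤ 0; in particular, t ↦ U(x(t)) is nonincreasing along the flow. -/

import Mathlib

/-- The cross product on `ℝ³` endowed with the Euclidean norm. -/
noncomputable def cross3 (a b : EuclideanSpace ℝ (Fin 3)) : EuclideanSpace ℝ (Fin 3) :=
  (WithLp.equiv 2 (Fin 3 → ℝ)).symm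
    (crossProduct ((WithLp.equiv 2 (Fin 3 → ℝ)) a) ((WithLp.equiv 2 (Fin 3 → ℝ)) b))

lemma cross3_inner_key (a g : EuclideanSpace ℝ (Fin 3)) :
    (inner ℝ g (cross3 a (cross3 a g)) : ℝ) = -‖cross3 a g‖ ^ 2 := by
  rw [← real_inner_self_eq_norm_sq]
  simp [cross3, crossProduct, PiLp.inner_apply, Fin.sum_univ_three, EuclideanSpace.real_norm_sq_eq]
  ring

/-- along the gradient-projection flow
`ẋ = x × (x × ∇U(x))` the potential `U` decreases: the derivative of
`t ↦ U(x(t))` equals `−‖x(t) × ∇U(x(t))‖² ≤ 0` on the interval `I`, so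
`t ↦ U(x(t))` is nonincreasing along the flow. -/
theorem potential_nonincreasing_along_flow
    (U : EuclideanSpace ℝ (Fin 3) → ℝ)
    (gradU : EuclideanSpace ℝ (Fin 3) → EuclideanSpace ℝ (Fin 3))
    (hU : ∀ p, HasGradientAt U (gradU p) p)
    (I : Set ℝ) (hI : I.OrdConnected)
    (x : ℝ → EuclideanSpace ℝ (Fin 3))
    (hx : ∀ t ∈ I, HasDerivAt x (cross3 (x t) (cross3 (x t) (gradU (x t)))) t) :
    (∀ t ∈ I,
        HasDerivAt (fun τ => U (x τ)) (-‖cross3 (x t) (gradU (x t))‖ ^ 2) t ∧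
          -‖cross3 (x t) (gradU (x t))‖ ^ 2 ≤ 0) ∧
      AntitoneOn (fun t => U (x t)) I := by
  have hderiv : ∀ t ∈ I,
      HasDerivAt (fun τ => U (x τ)) (-‖cross3 (x t) (gradU (x t))‖ ^ 2) t := by
    intro t ht
    have h1 := (hasGradientAt_iff_hasFDerivAt.mp (hU (x t))).comp_hasDerivAt t (hx t ht)
    have h2 : (InnerProductSpace.toDual ℝ (EuclideanSpace ℝ (Fin 3)) (gradU (x t)))
        (cross3 (x t) (cross3 (x t) (gradU (x t)))) = -‖cross3 (x t) (gradU (x t))‖ ^ 2 := by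
      rw [InnerProductSpace.toDual_apply_apply]
      exact cross3_inner_key _ _
    rwa [h2] at h1
  have hconv : Convex ℝ I := Set.ordConnected_iff_uIcc_subset.mp hI |> fun h =>
    convex_iff_ordConnected.mpr hI
  refine ⟨fun t ht => ⟨hderiv t ht, neg_nonpos.mpr (sq_nonneg _)⟩, ?_⟩
  apply antitoneOn_of_deriv_nonpos hconv
  · exact fun t ht => (hderiv t ht).continuousAt.continuousWithinAt
  · exact fun t ht => ((hderiv t (interior_subset ht)).differentiableAt).differentiableWithinAt
  · intro t ht
    rw [(hderiv t (interior_subset ht)).deriv]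
    exact neg_nonpos.mpr (sq_nonneg _)
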